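/- Let α, β, γ be Lipschitz integers with β orthogonal to α and γ orthogonal to α, i.e. (β * star α).re = 0 and (γ * star α).re = 0, and let δ be their vector product, i.e. a Lipschitz integer such that for every x : Quaternion ℤ, (δ * star x).re equals the determinant of the 4×4 integer matrix whose rows are the coordinate vectors ![re, imI, imJ, imK] of α, β, γ, x, in this order. Then δ is both a right and a left multiple of α: there exist Lipschitz integers λ and μ with δ = α * λ and δ = μ * α. -/

import Mathlib

/-- The coordinate vector of a Lipschitz integer. -/
def coords (q : Quaternion ℤ) : Fin 4 → ℤ := ![q.re, q.imI, q.imJ, q.imK]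

theorem det_fin_four' (A : Matrix (Fin 4) (Fin 4) ℤ) :
    A.det =
      A 0 0 * (A 1 1 * A 2 2 * A 3 3 - A 1 1 * A 2 3 * A 3 2 - A 1 2 * A 2 1 * A 3 3
        + A 1 2 * A 2 3 * A 3 1 + A 1 3 * A 2 1 * A 3 2 - A 1 3 * A 2 2 * A 3 1)
      - A 0 1 * (A 1 0 * A 2 2 * A 3 3 - A 1 0 * A 2 3 * A 3 2 - A 1 2 * A 2 0 * A 3 3
        + A 1 2 * A 2 3 * A 3 0 + A 1 3 * A 2 0 * A 3 2 - A 1 3 * A 2 2 * A 3 0)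
      + A 0 2 * (A 1 0 * A 2 1 * A 3 3 - A 1 0 * A 2 3 * A 3 1 - A 1 1 * A 2 0 * A 3 3
        + A 1 1 * A 2 3 * A 3 0 + A 1 3 * A 2 0 * A 3 1 - A 1 3 * A 2 1 * A 3 0)
      - A 0 3 * (A 1 0 * A 2 1 * A 3 2 - A 1 0 * A 2 2 * A 3 1 - A 1 1 * A 2 0 * A 3 2
        + A 1 1 * A 2 2 * A 3 0 + A 1 2 * A 2 0 * A 3 1 - A 1 2 * A 2 1 * A 3 0) := by
  rw [Matrix.det_succ_row_zero]
  simp [Fin.sum_univ_succ, Matrix.det_fin_three, Fin.succAbove,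
    show (Fin.succ 2 : Fin 4) = 3 from rfl, show (Fin.castSucc 2 : Fin 4) = 2 from rfl,
    show ((2:Fin 3).succ : Fin 4) = 3 from rfl]
  ring

theorem star_mk_re' (a b c d : ℤ) : (@star (Quaternion ℤ) _ ⟨a, b, c, d⟩).re = a := by
  erw [Quaternion.re_star]
theorem star_mk_imI' (a b c d : ℤ) : (@star (Quaternion ℤ) _ ⟨a, b, c, d⟩).imI = -b := rfl
theorem star_mk_imJ' (a b c d : ℤ) : (@star (Quaternion ℤ) _ ⟨a, b, c, d⟩).imJ = -c := rfl
theorem star_mk_imK' (a b c d : ℤ) : (@star (Quaternion ℤ) _ ⟨a, b, c, d⟩).imK = -d := rfl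

theorem vectorProduct_mem_left_and_right_multiples (α β γ δ : Quaternion ℤ)
    (hβ : (β * star α).re = 0) (hγ : (γ * star α).re = 0)
    (hδ : ∀ x : Quaternion ℤ,
      (δ * star x).re = (Matrix.of ![coords α, coords β, coords γ, coords x]).det) :
    (∃ l : Quaternion ℤ, δ = α * l) ∧ (∃ μ : Quaternion ℤ, δ = μ * α) := by
  have h0 := hδ 1
  have h1 := hδ ⟨0,1,0,0⟩
  have h2 := hδ ⟨0,0,1,0⟩
  have h3 := hδ ⟨0,0,0,1⟩
  simp only [coords, det_fin_four', Matrix.of_apply, Matrix.cons_val', Matrix.cons_val_zero,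
    Matrix.cons_val_one, Matrix.head_cons, Matrix.empty_val', Matrix.cons_val_fin_one,
    Matrix.head_fin_const, Matrix.cons_val_two, Matrix.tail_cons, Matrix.cons_val_three,
    Quaternion.re_mul, Quaternion.re_star, Quaternion.imI_star, Quaternion.imJ_star,
    Quaternion.imK_star, Quaternion.re_one, Quaternion.imI_one, Quaternion.imJ_one,
    Quaternion.imK_one, star_mk_re', star_mk_imI', star_mk_imJ', star_mk_imK'] at h0 h1 h2 h3 hβ hγ
  constructor
  · refine ⟨⟨0, γ.re*β.imI - γ.imI*β.re - γ.imJ*β.imK + γ.imK*β.imJ,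
              γ.re*β.imJ + γ.imI*β.imK - γ.imJ*β.re - γ.imK*β.imI,
              γ.re*β.imK - γ.imI*β.imJ + γ.imJ*β.imI - γ.imK*β.re⟩, ?_⟩
    apply Quaternion.ext
    · erw [Quaternion.re_mul]
      linear_combination h0 + γ.re * hβ - β.re * hγ
    · erw [Quaternion.imI_mul]
      linear_combination h1 + γ.imI * hβ - β.imI * hγ
    · erw [Quaternion.imJ_mul]
      linear_combination h2 + γ.imJ * hβ - β.imJ * hγ
    · erw [Quaternion.imK_mul]
      linear_combination h3 + γ.imK * hβ - β.imK * hγ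
  · refine ⟨⟨0, -γ.re*β.imI + γ.imI*β.re - γ.imJ*β.imK + γ.imK*β.imJ,
              -γ.re*β.imJ + γ.imI*β.imK + γ.imJ*β.re - γ.imK*β.imI,
              -γ.re*β.imK - γ.imI*β.imJ + γ.imJ*β.imI + γ.imK*β.re⟩, ?_⟩
    apply Quaternion.ext
    · erw [Quaternion.re_mul]
      linear_combination h0 - γ.re * hβ + β.re * hγ
    · erw [Quaternion.imI_mul]
      linear_combination h1 - γ.imI * hβ + β.imI * hγ
    · erw [Quaternion.imJ_mul]
      linear_combination h2 - γ.imJ * hβ + β.imJ * hγ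
    · erw [Quaternion.imK_mul]
      linear_combination h3 - γ.imK * hβ + β.imK * hγ
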